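/- Let p, q ≥ 1, m = p + q, let γ_{k1} > 0 for 1 ≤ k ≤ m, let c > 0, and let γ_{k2} > 0 for 1 ≤ k ≤ p and γ_{k2} < 0 for p+1 ≤ k ≤ m. Then the intersection of two real quadrics R = {u ∈ ℝ^m : Σ_{k=1}^m γ_{k1}u_k² = c and Σ_{k=1}^m γ_{k2}u_k² = 0} is homeomorphic to the product of spheres S^{p−1} × S^{q−1}. -/

import Mathlib

open Finset Real Fin

namespace Stmt10

lemma sphere_mem_iff {n : ℕ} (x : EuclideanSpace ℝ (Fin n)) :
    x ∈ Metric.sphere (0 : EuclideanSpace ℝ (Fin n)) 1 ↔ ∑ i, x i ^ 2 = 1 := by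
  rw [mem_sphere_zero_iff_norm, EuclideanSpace.norm_eq]
  simp only [Real.norm_eq_abs, sq_abs]
  exact Real.sqrt_eq_one

variable (p q : ℕ) (γ1 γ2 : Fin (p + q) → ℝ) (c : ℝ)

noncomputable def Sval (u : Fin (p + q) → ℝ) : ℝ :=
  ∑ i : Fin p, γ2 (castAdd q i) * u (castAdd q i) ^ 2

noncomputable def fwdX (u : Fin (p + q) → ℝ) : Fin p → ℝ :=
  fun i => Real.sqrt (γ2 (castAdd q i)) * u (castAdd q i) / Real.sqrt (Sval p q γ2 u)

noncomputable def fwdY (u : Fin (p + q) → ℝ) : Fin q → ℝ :=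
  fun j => Real.sqrt (-γ2 (natAdd p j)) * u (natAdd p j) / Real.sqrt (Sval p q γ2 u)

noncomputable def Fval (X : Fin p → ℝ) (Y : Fin q → ℝ) : ℝ :=
  ∑ i : Fin p, γ1 (castAdd q i) / γ2 (castAdd q i) * X i ^ 2
  + ∑ j : Fin q, γ1 (natAdd p j) / (-γ2 (natAdd p j)) * Y j ^ 2

noncomputable def inv (X : Fin p → ℝ) (Y : Fin q → ℝ) : Fin (p + q) → ℝ :=
  fun k => Fin.addCases
    (fun i => Real.sqrt (c / Fval p q γ1 γ2 X Y) * X i / Real.sqrt (γ2 (castAdd q i)))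
    (fun j => Real.sqrt (c / Fval p q γ1 γ2 X Y) * Y j / Real.sqrt (-γ2 (natAdd p j))) k


variable {p q γ1 γ2 c}

lemma A_pos (hγ2pos : ∀ k : Fin (p + q), (k : ℕ) < p → 0 < γ2 k) (i : Fin p) :
    0 < γ2 (castAdd q i) := hγ2pos _ (by simp)

lemma B_pos (hγ2neg : ∀ k : Fin (p + q), p ≤ (k : ℕ) → γ2 k < 0) (j : Fin q) :
    0 < -γ2 (natAdd p j) := by
  have := hγ2neg (natAdd p j) (by simp)
  linarith

lemma Tval_eq {u : Fin (p + q) → ℝ} (hu2 : ∑ k, γ2 k * u k ^ 2 = 0) :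
    ∑ j : Fin q, -γ2 (natAdd p j) * u (natAdd p j) ^ 2 = Sval p q γ2 u := by
  have h := Fin.sum_univ_add (f := fun k => γ2 k * u k ^ 2)
  rw [hu2] at h
  simp only [neg_mul, Finset.sum_neg_distrib]
  unfold Sval
  linarith

lemma Sval_pos (hc : 0 < c)
    (hγ2pos : ∀ k : Fin (p + q), (k : ℕ) < p → 0 < γ2 k)
    (hγ2neg : ∀ k : Fin (p + q), p ≤ (k : ℕ) → γ2 k < 0)
    {u : Fin (p + q) → ℝ}
    (hu1 : ∑ k, γ1 k * u k ^ 2 = c) (hu2 : ∑ k, γ2 k * u k ^ 2 = 0) :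
    0 < Sval p q γ2 u := by
  have hnn : ∀ i ∈ Finset.univ, 0 ≤ γ2 (castAdd q i) * u (castAdd q i) ^ 2 :=
    fun i _ => mul_nonneg (A_pos hγ2pos i).le (sq_nonneg _)
  rcases (Finset.sum_nonneg hnn).lt_or_eq with h | h
  · exact h
  · exfalso
    have hzero : ∀ (f : Fin p → ℝ) (A : Fin p → ℝ), (∀ i, 0 < A i) →
        (∀ i ∈ Finset.univ, A i * f i ^ 2 = 0) → ∀ i, f i = 0 := by
      intro f A hA h0 i
      have := h0 i (Finset.mem_univ i)
      rcases mul_eq_zero.1 this with h' | h'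
      · exact absurd h' (hA i).ne'
      · exact pow_eq_zero_iff two_ne_zero |>.1 h'
    have hx : ∀ i : Fin p, u (castAdd q i) = 0 :=
      hzero _ _ (fun i => A_pos hγ2pos i)
        ((Finset.sum_eq_zero_iff_of_nonneg hnn).1 h.symm)
    have hTS := Tval_eq (γ2 := γ2) hu2
    have hnn' : ∀ j ∈ Finset.univ, 0 ≤ -γ2 (natAdd p j) * u (natAdd p j) ^ 2 :=
      fun j _ => mul_nonneg (B_pos hγ2neg j).le (sq_nonneg _)
    have hTzero : ∑ j : Fin q, -γ2 (natAdd p j) * u (natAdd p j) ^ 2 = 0 := by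
      rw [hTS]; exact h.symm
    have hy : ∀ j : Fin q, u (natAdd p j) = 0 := by
      intro j
      have := (Finset.sum_eq_zero_iff_of_nonneg hnn').1 hTzero j (Finset.mem_univ j)
      rcases mul_eq_zero.1 this with h' | h'
      · exact absurd h' (B_pos hγ2neg j).ne'
      · exact pow_eq_zero_iff two_ne_zero |>.1 h'
    have : (∑ k, γ1 k * u k ^ 2) = 0 := by
      rw [Fin.sum_univ_add (f := fun k => γ1 k * u k ^ 2)]
      simp [hx, hy]
    rw [hu1] at this
    exact hc.ne' this

lemma Fval_pos (hγ1 : ∀ k, 0 < γ1 k)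
    (hγ2pos : ∀ k : Fin (p + q), (k : ℕ) < p → 0 < γ2 k)
    (hγ2neg : ∀ k : Fin (p + q), p ≤ (k : ℕ) → γ2 k < 0)
    {X : Fin p → ℝ} {Y : Fin q → ℝ} (hX : ∑ i, X i ^ 2 = 1) :
    0 < Fval p q γ1 γ2 X Y := by
  obtain ⟨i, hi⟩ : ∃ i, X i ≠ 0 := by
    by_contra h
    push_neg at h
    simp [h] at hX
  have h1 : 0 < ∑ i : Fin p, γ1 (castAdd q i) / γ2 (castAdd q i) * X i ^ 2 := by
    apply Finset.sum_pos'
      (fun i _ => mul_nonneg (div_nonneg (hγ1 _).le (A_pos hγ2pos i).le) (sq_nonneg _))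
    exact ⟨i, Finset.mem_univ i, mul_pos (div_pos (hγ1 _) (A_pos hγ2pos i))
      (lt_of_le_of_ne (sq_nonneg _) (Ne.symm (pow_ne_zero 2 hi)))⟩
  have h2 : 0 ≤ ∑ j : Fin q, γ1 (natAdd p j) / (-γ2 (natAdd p j)) * Y j ^ 2 :=
    Finset.sum_nonneg fun j _ =>
      mul_nonneg (div_nonneg (hγ1 _).le (B_pos hγ2neg j).le) (sq_nonneg _)
  unfold Fval
  linarith


lemma fwdX_sq (hγ2pos : ∀ k : Fin (p + q), (k : ℕ) < p → 0 < γ2 k)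
    {u : Fin (p + q) → ℝ} (hS : 0 < Sval p q γ2 u) :
    ∑ i, fwdX p q γ2 u i ^ 2 = 1 := by
  unfold fwdX
  have h : ∀ i ∈ Finset.univ,
      (Real.sqrt (γ2 (castAdd q i)) * u (castAdd q i) / Real.sqrt (Sval p q γ2 u)) ^ 2
      = γ2 (castAdd q i) * u (castAdd q i) ^ 2 / Sval p q γ2 u := by
    intro i _
    rw [div_pow, mul_pow, Real.sq_sqrt (A_pos hγ2pos i).le, Real.sq_sqrt hS.le]
  rw [Finset.sum_congr rfl h, ← Finset.sum_div]
  exact div_self hS.ne'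

lemma fwdY_sq (hγ2neg : ∀ k : Fin (p + q), p ≤ (k : ℕ) → γ2 k < 0)
    {u : Fin (p + q) → ℝ} (hS : 0 < Sval p q γ2 u)
    (hu2 : ∑ k, γ2 k * u k ^ 2 = 0) :
    ∑ j, fwdY p q γ2 u j ^ 2 = 1 := by
  unfold fwdY
  have h : ∀ j ∈ Finset.univ,
      (Real.sqrt (-γ2 (natAdd p j)) * u (natAdd p j) / Real.sqrt (Sval p q γ2 u)) ^ 2
      = -γ2 (natAdd p j) * u (natAdd p j) ^ 2 / Sval p q γ2 u := by
    intro j _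
    rw [div_pow, mul_pow, Real.sq_sqrt (B_pos hγ2neg j).le, Real.sq_sqrt hS.le]
  rw [Finset.sum_congr rfl h, ← Finset.sum_div, Tval_eq hu2]
  exact div_self hS.ne'

lemma inv_mem (hc : 0 < c) (hγ1 : ∀ k, 0 < γ1 k)
    (hγ2pos : ∀ k : Fin (p + q), (k : ℕ) < p → 0 < γ2 k)
    (hγ2neg : ∀ k : Fin (p + q), p ≤ (k : ℕ) → γ2 k < 0)
    {X : Fin p → ℝ} {Y : Fin q → ℝ} (hX : ∑ i, X i ^ 2 = 1) (hY : ∑ j, Y j ^ 2 = 1) :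
    (∑ k, γ1 k * inv p q γ1 γ2 c X Y k ^ 2) = c ∧
    (∑ k, γ2 k * inv p q γ1 γ2 c X Y k ^ 2) = 0 := by
  have hF := Fval_pos hγ1 hγ2pos hγ2neg (Y := Y) hX
  have hs2 : 0 ≤ c / Fval p q γ1 γ2 X Y := div_nonneg hc.le hF.le
  constructor
  · rw [Fin.sum_univ_add (f := fun k => γ1 k * inv p q γ1 γ2 c X Y k ^ 2)]
    simp only [inv, Fin.addCases_left, Fin.addCases_right]
    have h1 : ∀ i ∈ Finset.univ, γ1 (castAdd q i) *
        (Real.sqrt (c / Fval p q γ1 γ2 X Y) * X i / Real.sqrt (γ2 (castAdd q i))) ^ 2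
        = c / Fval p q γ1 γ2 X Y * (γ1 (castAdd q i) / γ2 (castAdd q i) * X i ^ 2) := by
      intro i _
      rw [div_pow, mul_pow, Real.sq_sqrt (A_pos hγ2pos i).le, Real.sq_sqrt hs2]
      field_simp
    have h2 : ∀ j ∈ Finset.univ, γ1 (natAdd p j) *
        (Real.sqrt (c / Fval p q γ1 γ2 X Y) * Y j / Real.sqrt (-γ2 (natAdd p j))) ^ 2
        = c / Fval p q γ1 γ2 X Y * (γ1 (natAdd p j) / (-γ2 (natAdd p j)) * Y j ^ 2) := by
      intro j _
      rw [div_pow, mul_pow, Real.sq_sqrt (B_pos hγ2neg j).le, Real.sq_sqrt hs2]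
      have := (B_pos hγ2neg j).ne'
      field_simp
    rw [Finset.sum_congr rfl h1, Finset.sum_congr rfl h2, ← Finset.mul_sum, ← Finset.mul_sum,
      ← mul_add]
    exact div_mul_cancel₀ c hF.ne'
  · rw [Fin.sum_univ_add (f := fun k => γ2 k * inv p q γ1 γ2 c X Y k ^ 2)]
    simp only [inv, Fin.addCases_left, Fin.addCases_right]
    have h1 : ∀ i ∈ Finset.univ, γ2 (castAdd q i) *
        (Real.sqrt (c / Fval p q γ1 γ2 X Y) * X i / Real.sqrt (γ2 (castAdd q i))) ^ 2
        = c / Fval p q γ1 γ2 X Y * X i ^ 2 := by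
      intro i _
      rw [div_pow, mul_pow, Real.sq_sqrt (A_pos hγ2pos i).le, Real.sq_sqrt hs2]
      have := (A_pos hγ2pos i).ne'
      field_simp
    have h2 : ∀ j ∈ Finset.univ, γ2 (natAdd p j) *
        (Real.sqrt (c / Fval p q γ1 γ2 X Y) * Y j / Real.sqrt (-γ2 (natAdd p j))) ^ 2
        = -(c / Fval p q γ1 γ2 X Y * Y j ^ 2) := by
      intro j _
      rw [div_pow, mul_pow, Real.sq_sqrt (B_pos hγ2neg j).le, Real.sq_sqrt hs2]
      have hg : γ2 (natAdd p j) ≠ 0 := fun h => (B_pos hγ2neg j).ne' (by rw [h, neg_zero])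
      rw [div_neg, mul_neg, mul_div_assoc', mul_div_cancel_left₀ _ hg]
    rw [Finset.sum_congr rfl h1, Finset.sum_congr rfl h2, Finset.sum_neg_distrib,
      ← Finset.mul_sum, ← Finset.mul_sum, hX, hY]
    ring


lemma Sval_inv (hc : 0 < c) (hγ1 : ∀ k, 0 < γ1 k)
    (hγ2pos : ∀ k : Fin (p + q), (k : ℕ) < p → 0 < γ2 k)
    (hγ2neg : ∀ k : Fin (p + q), p ≤ (k : ℕ) → γ2 k < 0)
    {X : Fin p → ℝ} {Y : Fin q → ℝ} (hX : ∑ i, X i ^ 2 = 1) :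
    Sval p q γ2 (inv p q γ1 γ2 c X Y) = c / Fval p q γ1 γ2 X Y := by
  have hF := Fval_pos hγ1 hγ2pos hγ2neg (Y := Y) hX
  have hs2 : 0 ≤ c / Fval p q γ1 γ2 X Y := div_nonneg hc.le hF.le
  unfold Sval inv
  simp only [Fin.addCases_left]
  have h : ∀ i ∈ Finset.univ, γ2 (castAdd q i) *
      (Real.sqrt (c / Fval p q γ1 γ2 X Y) * X i / Real.sqrt (γ2 (castAdd q i))) ^ 2
      = c / Fval p q γ1 γ2 X Y * X i ^ 2 := by
    intro i _
    rw [div_pow, mul_pow, Real.sq_sqrt (A_pos hγ2pos i).le, Real.sq_sqrt hs2,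
      mul_div_assoc', mul_div_cancel_left₀ _ (A_pos hγ2pos i).ne']
  rw [Finset.sum_congr rfl h, ← Finset.mul_sum, hX, mul_one]

lemma fwdX_inv (hc : 0 < c) (hγ1 : ∀ k, 0 < γ1 k)
    (hγ2pos : ∀ k : Fin (p + q), (k : ℕ) < p → 0 < γ2 k)
    (hγ2neg : ∀ k : Fin (p + q), p ≤ (k : ℕ) → γ2 k < 0)
    {X : Fin p → ℝ} {Y : Fin q → ℝ} (hX : ∑ i, X i ^ 2 = 1) :
    fwdX p q γ2 (inv p q γ1 γ2 c X Y) = X := by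
  have hF := Fval_pos hγ1 hγ2pos hγ2neg (Y := Y) hX
  have hs2 : 0 < c / Fval p q γ1 γ2 X Y := div_pos hc hF
  funext i
  unfold fwdX
  rw [Sval_inv hc hγ1 hγ2pos hγ2neg hX]
  simp only [inv, Fin.addCases_left]
  have hA : Real.sqrt (γ2 (castAdd q i)) ≠ 0 :=
    (Real.sqrt_pos.2 (A_pos hγ2pos i)).ne'
  have hs : Real.sqrt (c / Fval p q γ1 γ2 X Y) ≠ 0 := (Real.sqrt_pos.2 hs2).ne'
  field_simp

lemma fwdY_inv (hc : 0 < c) (hγ1 : ∀ k, 0 < γ1 k)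
    (hγ2pos : ∀ k : Fin (p + q), (k : ℕ) < p → 0 < γ2 k)
    (hγ2neg : ∀ k : Fin (p + q), p ≤ (k : ℕ) → γ2 k < 0)
    {X : Fin p → ℝ} {Y : Fin q → ℝ} (hX : ∑ i, X i ^ 2 = 1) :
    fwdY p q γ2 (inv p q γ1 γ2 c X Y) = Y := by
  have hF := Fval_pos hγ1 hγ2pos hγ2neg (Y := Y) hX
  have hs2 : 0 < c / Fval p q γ1 γ2 X Y := div_pos hc hF
  funext j
  unfold fwdY
  rw [Sval_inv hc hγ1 hγ2pos hγ2neg hX]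
  simp only [inv, Fin.addCases_right]
  have hB : Real.sqrt (-γ2 (natAdd p j)) ≠ 0 :=
    (Real.sqrt_pos.2 (B_pos hγ2neg j)).ne'
  have hs : Real.sqrt (c / Fval p q γ1 γ2 X Y) ≠ 0 := (Real.sqrt_pos.2 hs2).ne'
  field_simp

lemma Fval_fwd (hc : 0 < c)
    (hγ2pos : ∀ k : Fin (p + q), (k : ℕ) < p → 0 < γ2 k)
    (hγ2neg : ∀ k : Fin (p + q), p ≤ (k : ℕ) → γ2 k < 0)
    {u : Fin (p + q) → ℝ}
    (hu1 : ∑ k, γ1 k * u k ^ 2 = c) (hu2 : ∑ k, γ2 k * u k ^ 2 = 0)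
    (hS : 0 < Sval p q γ2 u) :
    Fval p q γ1 γ2 (fwdX p q γ2 u) (fwdY p q γ2 u) = c / Sval p q γ2 u := by
  unfold Fval fwdX fwdY
  have h1 : ∀ i ∈ Finset.univ, γ1 (castAdd q i) / γ2 (castAdd q i) *
      (Real.sqrt (γ2 (castAdd q i)) * u (castAdd q i) / Real.sqrt (Sval p q γ2 u)) ^ 2
      = γ1 (castAdd q i) * u (castAdd q i) ^ 2 / Sval p q γ2 u := by
    intro i _
    rw [div_pow, mul_pow, Real.sq_sqrt (A_pos hγ2pos i).le, Real.sq_sqrt hS.le]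
    have := (A_pos hγ2pos i).ne'
    field_simp
  have h2 : ∀ j ∈ Finset.univ, γ1 (natAdd p j) / (-γ2 (natAdd p j)) *
      (Real.sqrt (-γ2 (natAdd p j)) * u (natAdd p j) / Real.sqrt (Sval p q γ2 u)) ^ 2
      = γ1 (natAdd p j) * u (natAdd p j) ^ 2 / Sval p q γ2 u := by
    intro j _
    rw [div_pow, mul_pow, Real.sq_sqrt (B_pos hγ2neg j).le, Real.sq_sqrt hS.le,
      mul_div_assoc']
    congr 1
    have hg : γ2 (natAdd p j) ≠ 0 := fun h => (B_pos hγ2neg j).ne' (by rw [h, neg_zero])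
    field_simp
  rw [Finset.sum_congr rfl h1, Finset.sum_congr rfl h2, ← Finset.sum_div, ← Finset.sum_div,
    ← add_div, ← Fin.sum_univ_add (f := fun k => γ1 k * u k ^ 2), hu1]

lemma left_inv_aux (hc : 0 < c) (hγ1 : ∀ k, 0 < γ1 k)
    (hγ2pos : ∀ k : Fin (p + q), (k : ℕ) < p → 0 < γ2 k)
    (hγ2neg : ∀ k : Fin (p + q), p ≤ (k : ℕ) → γ2 k < 0)
    {u : Fin (p + q) → ℝ}
    (hu1 : ∑ k, γ1 k * u k ^ 2 = c) (hu2 : ∑ k, γ2 k * u k ^ 2 = 0) :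
    inv p q γ1 γ2 c (fwdX p q γ2 u) (fwdY p q γ2 u) = u := by
  have hS := Sval_pos hc hγ2pos hγ2neg hu1 hu2
  have hFf := Fval_fwd hc hγ2pos hγ2neg hu1 hu2 hS
  have hcs : c / (c / Sval p q γ2 u) = Sval p q γ2 u := by
    rw [div_div_eq_mul_div, mul_comm, mul_div_assoc, div_self hc.ne', mul_one]
  have hsS : Real.sqrt (Sval p q γ2 u) ≠ 0 := (Real.sqrt_pos.2 hS).ne'
  funext k
  refine Fin.addCases (fun i => ?_) (fun j => ?_) k
  · simp only [inv, Fin.addCases_left, hFf, hcs, fwdX]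
    have hA : Real.sqrt (γ2 (castAdd q i)) ≠ 0 :=
      (Real.sqrt_pos.2 (A_pos hγ2pos i)).ne'
    field_simp
  · simp only [inv, Fin.addCases_right, hFf, hcs, fwdY]
    have hB : Real.sqrt (-γ2 (natAdd p j)) ≠ 0 :=
      (Real.sqrt_pos.2 (B_pos hγ2neg j)).ne'
    field_simp


lemma cont_fwdX (hc : 0 < c)
    (hγ2pos : ∀ k : Fin (p + q), (k : ℕ) < p → 0 < γ2 k)
    (hγ2neg : ∀ k : Fin (p + q), p ≤ (k : ℕ) → γ2 k < 0) :
    Continuous fun u : {u : Fin (p + q) → ℝ |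
        (∑ k, γ1 k * u k ^ 2) = c ∧ (∑ k, γ2 k * u k ^ 2) = 0} =>
      (WithLp.toLp 2 (fwdX p q γ2 u.1) : EuclideanSpace ℝ (Fin p)) := by
  have contS : Continuous fun u : {u : Fin (p + q) → ℝ |
      (∑ k, γ1 k * u k ^ 2) = c ∧ (∑ k, γ2 k * u k ^ 2) = 0} => Sval p q γ2 u.1 := by
    unfold Sval
    exact continuous_finset_sum _ fun i _ =>
      continuous_const.mul (((continuous_apply (castAdd q i)).comp continuous_subtype_val).pow 2)
  refine (PiLp.continuous_toLp 2 fun _ : Fin p => ℝ).comp ?_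
  refine continuous_pi fun i => ?_
  exact (continuous_const.mul
      ((continuous_apply (castAdd q i)).comp continuous_subtype_val)).div
    (Real.continuous_sqrt.comp contS)
    fun u => Real.sqrt_ne_zero'.2 (Sval_pos hc hγ2pos hγ2neg u.2.1 u.2.2)

lemma cont_fwdY (hc : 0 < c)
    (hγ2pos : ∀ k : Fin (p + q), (k : ℕ) < p → 0 < γ2 k)
    (hγ2neg : ∀ k : Fin (p + q), p ≤ (k : ℕ) → γ2 k < 0) :
    Continuous fun u : {u : Fin (p + q) → ℝ |
        (∑ k, γ1 k * u k ^ 2) = c ∧ (∑ k, γ2 k * u k ^ 2) = 0} =>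
      (WithLp.toLp 2 (fwdY p q γ2 u.1) : EuclideanSpace ℝ (Fin q)) := by
  have contS : Continuous fun u : {u : Fin (p + q) → ℝ |
      (∑ k, γ1 k * u k ^ 2) = c ∧ (∑ k, γ2 k * u k ^ 2) = 0} => Sval p q γ2 u.1 := by
    unfold Sval
    exact continuous_finset_sum _ fun i _ =>
      continuous_const.mul (((continuous_apply (castAdd q i)).comp continuous_subtype_val).pow 2)
  refine (PiLp.continuous_toLp 2 fun _ : Fin q => ℝ).comp ?_
  refine continuous_pi fun j => ?_
  exact (continuous_const.mul
      ((continuous_apply (natAdd p j)).comp continuous_subtype_val)).div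
    (Real.continuous_sqrt.comp contS)
    fun u => Real.sqrt_ne_zero'.2 (Sval_pos hc hγ2pos hγ2neg u.2.1 u.2.2)

lemma cont_inv (hc : 0 < c) (hγ1 : ∀ k, 0 < γ1 k)
    (hγ2pos : ∀ k : Fin (p + q), (k : ℕ) < p → 0 < γ2 k)
    (hγ2neg : ∀ k : Fin (p + q), p ≤ (k : ℕ) → γ2 k < 0) :
    Continuous fun z : (Metric.sphere (0 : EuclideanSpace ℝ (Fin p)) 1 ×
        Metric.sphere (0 : EuclideanSpace ℝ (Fin q)) 1) =>
      inv p q γ1 γ2 c z.1.1 z.2.1 := by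
  have contX : ∀ i : Fin p, Continuous fun z : (Metric.sphere (0 : EuclideanSpace ℝ (Fin p)) 1 ×
      Metric.sphere (0 : EuclideanSpace ℝ (Fin q)) 1) => z.1.1 i :=
    fun i => (continuous_apply i).comp ((PiLp.continuous_ofLp 2 fun _ : Fin p => ℝ).comp
      (continuous_subtype_val.comp continuous_fst))
  have contY : ∀ j : Fin q, Continuous fun z : (Metric.sphere (0 : EuclideanSpace ℝ (Fin p)) 1 ×
      Metric.sphere (0 : EuclideanSpace ℝ (Fin q)) 1) => z.2.1 j :=
    fun j => (continuous_apply j).comp ((PiLp.continuous_ofLp 2 fun _ : Fin q => ℝ).comp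
      (continuous_subtype_val.comp continuous_snd))
  have contF : Continuous fun z : (Metric.sphere (0 : EuclideanSpace ℝ (Fin p)) 1 ×
      Metric.sphere (0 : EuclideanSpace ℝ (Fin q)) 1) => Fval p q γ1 γ2 z.1.1 z.2.1 := by
    unfold Fval
    exact (continuous_finset_sum _ fun i _ => continuous_const.mul ((contX i).pow 2)).add
      (continuous_finset_sum _ fun j _ => continuous_const.mul ((contY j).pow 2))
  have conts : Continuous fun z : (Metric.sphere (0 : EuclideanSpace ℝ (Fin p)) 1 ×
      Metric.sphere (0 : EuclideanSpace ℝ (Fin q)) 1) =>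
      Real.sqrt (c / Fval p q γ1 γ2 z.1.1 z.2.1) := by
    refine Real.continuous_sqrt.comp (continuous_const.div contF fun z => ?_)
    exact (Fval_pos hγ1 hγ2pos hγ2neg ((sphere_mem_iff z.1.1).1 z.1.2)).ne'
  refine continuous_pi fun k => ?_
  refine Fin.addCases (motive := fun k =>
    Continuous fun z : (Metric.sphere (0 : EuclideanSpace ℝ (Fin p)) 1 ×
      Metric.sphere (0 : EuclideanSpace ℝ (Fin q)) 1) => inv p q γ1 γ2 c z.1.1 z.2.1 k)
    (fun i => ?_) (fun j => ?_) k
  · simp only [inv, Fin.addCases_left]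
    exact (conts.mul (contX i)).div continuous_const fun _ =>
      (Real.sqrt_pos.2 (A_pos hγ2pos i)).ne'
  · simp only [inv, Fin.addCases_right]
    exact (conts.mul (contY j)).div continuous_const fun _ =>
      (Real.sqrt_pos.2 (B_pos hγ2neg j)).ne'

end Stmt10

/-- Two real quadrics: the intersection
`R = {u ∈ ℝᵐ : ∑ γ_{k1}u_k² = c, ∑ γ_{k2}u_k² = 0}` (with `γ_{k1} > 0`, `c > 0`,
`γ_{k2} > 0` for `k ≤ p` and `γ_{k2} < 0` for `k > p`, `m = p + q`) is homeomorphic to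
`S^{p-1} × S^{q-1}`, where `S^{p-1}` and `S^{q-1}` are the unit spheres in `ℝᵖ`, `ℝ^q`. -/
theorem stmt_10 (p q : ℕ) (hp : 1 ≤ p) (hq : 1 ≤ q)
    (γ1 γ2 : Fin (p + q) → ℝ) (c : ℝ) (hc : 0 < c)
    (hγ1 : ∀ k, 0 < γ1 k)
    (hγ2pos : ∀ k : Fin (p + q), (k : ℕ) < p → 0 < γ2 k)
    (hγ2neg : ∀ k : Fin (p + q), p ≤ (k : ℕ) → γ2 k < 0) :
    Nonempty
      ({u : Fin (p + q) → ℝ |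
          (∑ k, γ1 k * u k ^ 2) = c ∧ (∑ k, γ2 k * u k ^ 2) = 0} ≃ₜ
        (Metric.sphere (0 : EuclideanSpace ℝ (Fin p)) 1 ×
          Metric.sphere (0 : EuclideanSpace ℝ (Fin q)) 1)) := by
  constructor
  exact
    { toFun := fun u =>
        (⟨(WithLp.toLp 2 (Stmt10.fwdX p q γ2 u.1) : EuclideanSpace ℝ (Fin p)),
          (Stmt10.sphere_mem_iff _).2
            (Stmt10.fwdX_sq hγ2pos (Stmt10.Sval_pos hc hγ2pos hγ2neg u.2.1 u.2.2))⟩,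
         ⟨(WithLp.toLp 2 (Stmt10.fwdY p q γ2 u.1) : EuclideanSpace ℝ (Fin q)),
          (Stmt10.sphere_mem_iff _).2
            (Stmt10.fwdY_sq hγ2neg (Stmt10.Sval_pos hc hγ2pos hγ2neg u.2.1 u.2.2) u.2.2)⟩),
      invFun := fun z =>
        ⟨Stmt10.inv p q γ1 γ2 c z.1.1 z.2.1,
          Stmt10.inv_mem hc hγ1 hγ2pos hγ2neg
            ((Stmt10.sphere_mem_iff z.1.1).1 z.1.2) ((Stmt10.sphere_mem_iff z.2.1).1 z.2.2)⟩,
      left_inv := fun u =>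
        Subtype.ext (Stmt10.left_inv_aux hc hγ1 hγ2pos hγ2neg u.2.1 u.2.2),
      right_inv := fun z =>
        Prod.ext
          (Subtype.ext (congrArg (WithLp.toLp 2) (Stmt10.fwdX_inv hc hγ1 hγ2pos hγ2neg
            ((Stmt10.sphere_mem_iff z.1.1).1 z.1.2))))
          (Subtype.ext (congrArg (WithLp.toLp 2) (Stmt10.fwdY_inv hc hγ1 hγ2pos hγ2neg
            ((Stmt10.sphere_mem_iff z.1.1).1 z.1.2)))),
      continuous_toFun := by
        exact ((Stmt10.cont_fwdX hc hγ2pos hγ2neg).subtype_mk _).prodMk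
          ((Stmt10.cont_fwdY hc hγ2pos hγ2neg).subtype_mk _)
      continuous_invFun := by
        exact (Stmt10.cont_inv hc hγ1 hγ2pos hγ2neg).subtype_mk _ }
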